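/- Let (X, D) be a metric space and μ : X → ℝ a 1-Lipschitz function. Let x_* ∈ X satisfy μ(x) ≤ μ(x_*) for all x ∈ X. Let u, v ∈ X, let f_u, f_v be real numbers and r_u, r_v ≥ 0 real numbers such that |f_u − μ(u)| ≤ r_u, |f_v − μ(v)| ≤ r_v, and D(u, x_*) ≤ r_u. Then f_v − r_v ≤ f_u + 2·r_u. -/
import Mathlib

/-- Under a clean process, the confidence ball containing the optimal arm can
never be eliminated by the removal rule of the Robust Zooming algorithm. -/
theorem stmt_4 {X : Type*} [MetricSpace X] (μ : X → ℝ)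
    (hlip : ∀ x y : X, |μ x - μ y| ≤ dist x y)
    (xstar : X) (hopt : ∀ x : X, μ x ≤ μ xstar)
    (u v : X) (fu fv ru rv : ℝ) (hru : 0 ≤ ru) (hrv : 0 ≤ rv)
    (hfu : |fu - μ u| ≤ ru) (hfv : |fv - μ v| ≤ rv)
    (hball : dist u xstar ≤ ru) :
    fv - rv ≤ fu + 2 * ru := by
  have h1 := abs_le.mp hfu
  have h2 := abs_le.mp hfv
  have h3 := abs_le.mp (hlip xstar u)
  have h4 := hopt v
  rw [dist_comm] at h3
  linarith [h3.2, h1.1, h2.2]
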